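/- Let g : (0,∞) → ℝ be continuous and strictly increasing with g(t) → +∞ as t → +∞, and let j > 0. Then there exist a unique constant H̄ ∈ ℝ, a unique continuous 1-periodic function m : ℝ → (0,∞) with ∫₀¹ m(x) dx = 1, a unique real number p, and a unique C¹ 1-periodic function u : ℝ → ℝ with u(0) = 0, such that (u'(x)+p)²/2 + V(x) = g(m(x)) + H̄ and m(x)·(u'(x)+p) = j for all x ∈ ℝ. Necessarily, for each x, m(x) is the unique positive solution of j²/(2 m(x)²) − g(m(x)) = H̄ − V(x), p = ∫₀¹ j/m(y) dy, and u(x) = ∫₀ˣ j/m(y) dy − p x. -/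

import Mathlib

open MeasureTheory Filter

/-- existence and uniqueness of a smooth solution of the stationary
one-dimensional MFG with increasing coupling `g` at positive current level `j`,
together with the explicit formulas it necessarily satisfies. -/
theorem stmt_0
    (V : ℝ → ℝ) (hVc : Continuous V) (hVp : Function.Periodic V 1)
    (g : ℝ → ℝ) (hgc : ContinuousOn g (Set.Ioi 0))
    (hgm : StrictMonoOn g (Set.Ioi 0))
    (hgt : Tendsto g atTop atTop)
    (j : ℝ) (hj : 0 < j) :
    (∃! q : ℝ × (ℝ → ℝ) × ℝ × (ℝ → ℝ),
      (∀ x, 0 < q.2.1 x) ∧ Continuous q.2.1 ∧ Function.Periodic q.2.1 1 ∧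
      (∫ x in (0:ℝ)..1, q.2.1 x) = 1 ∧
      ContDiff ℝ 1 q.2.2.2 ∧ Function.Periodic q.2.2.2 1 ∧ q.2.2.2 0 = 0 ∧
      (∀ x, (deriv q.2.2.2 x + q.2.2.1) ^ 2 / 2 + V x = g (q.2.1 x) + q.1) ∧
      (∀ x, q.2.1 x * (deriv q.2.2.2 x + q.2.2.1) = j)) ∧
    (∀ (H : ℝ) (m : ℝ → ℝ) (p : ℝ) (u : ℝ → ℝ),
      ((∀ x, 0 < m x) ∧ Continuous m ∧ Function.Periodic m 1 ∧
        (∫ x in (0:ℝ)..1, m x) = 1 ∧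
        ContDiff ℝ 1 u ∧ Function.Periodic u 1 ∧ u 0 = 0 ∧
        (∀ x, (deriv u x + p) ^ 2 / 2 + V x = g (m x) + H) ∧
        (∀ x, m x * (deriv u x + p) = j)) →
      (∀ x t, 0 < t → j ^ 2 / (2 * t ^ 2) - g t = H - V x → t = m x) ∧
      p = (∫ y in (0:ℝ)..1, j / m y) ∧
      ∀ x, u x = (∫ y in (0:ℝ)..x, j / m y) - p * x) := by
  -- The auxiliary function K(s) = g(eˢ) - j²/(2 e²ˢ), a strictly monotone
  -- continuous surjection ℝ → ℝ.
  set K : ℝ → ℝ := fun s => g (Real.exp s) - j ^ 2 / (2 * Real.exp s ^ 2) with hKdef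
  have hKmono : StrictMono K := by
    intro s t hst
    have h1 : g (Real.exp s) < g (Real.exp t) :=
      hgm (Set.mem_Ioi.2 (Real.exp_pos s)) (Set.mem_Ioi.2 (Real.exp_pos t))
        (Real.exp_lt_exp.2 hst)
    have h2 : j ^ 2 / (2 * Real.exp t ^ 2) < j ^ 2 / (2 * Real.exp s ^ 2) := by
      have : Real.exp s ^ 2 < Real.exp t ^ 2 := by
        have := Real.exp_lt_exp.2 hst
        nlinarith [Real.exp_pos s, Real.exp_pos t]
      apply div_lt_div_of_pos_left (by positivity) (by positivity) (by linarith)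
    simp only [hKdef]
    linarith
  have hKcont : Continuous K := by
    apply Continuous.sub
    · exact hgc.comp_continuous Real.continuous_exp fun s => Set.mem_Ioi.2 (Real.exp_pos s)
    · exact continuous_const.div (by continuity) fun s => by positivity
  have hKtop : Tendsto K atTop atTop := by
    apply tendsto_atTop_mono' atTop
      (show (fun s => g (Real.exp s) + (- (j ^ 2 / 2))) ≤ᶠ[atTop] K from ?_) ?_
    · filter_upwards [eventually_ge_atTop (0:ℝ)] with s hs
      have h1 : (1:ℝ) ≤ Real.exp s := Real.one_le_exp hs
      have h2 : j ^ 2 / (2 * Real.exp s ^ 2) ≤ j ^ 2 / 2 := by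
        apply div_le_div_of_nonneg_left (by positivity) (by norm_num) (by nlinarith)
      simp only [hKdef]
      linarith
    · exact tendsto_atTop_add_const_right _ _ (hgt.comp Real.tendsto_exp_atTop)
  have hKbot : Tendsto K atBot atBot := by
    apply tendsto_atBot_mono' atBot
      (show K ≤ᶠ[atBot] (fun s => g 1 - j ^ 2 / (2 * Real.exp s ^ 2)) from ?_) ?_
    · filter_upwards [eventually_le_atBot (0:ℝ)] with s hs
      have h1 : Real.exp s ≤ 1 := Real.exp_le_one_iff.2 hs
      have h2 : g (Real.exp s) ≤ g 1 :=
        hgm.monotoneOn (Set.mem_Ioi.2 (Real.exp_pos s)) (Set.mem_Ioi.2 one_pos) h1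
      simp only [hKdef]
      linarith
    · have h3 : Tendsto (fun s : ℝ => 2 * Real.exp s ^ 2) atBot (nhdsWithin 0 (Set.Ioi 0)) := by
        apply tendsto_nhdsWithin_of_tendsto_nhds_of_eventually_within
        · have : Tendsto (fun s : ℝ => 2 * Real.exp s ^ 2) atBot (nhds (2 * (0:ℝ) ^ 2)) := by
            exact (Real.tendsto_exp_atBot.pow 2).const_mul 2
          simpa using this
        · filter_upwards with s using Set.mem_Ioi.2 (by positivity)
      have h4 : Tendsto (fun s : ℝ => j ^ 2 / (2 * Real.exp s ^ 2)) atBot atTop := by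
        simpa [div_eq_mul_inv] using h3.inv_tendsto_nhdsGT_zero.const_mul_atTop (by positivity : 0 < j ^ 2)
      have h5 : Tendsto (fun s : ℝ => g 1 - j ^ 2 / (2 * Real.exp s ^ 2)) atBot atBot := by
        simpa [sub_eq_add_neg] using
          tendsto_atBot_add_const_left atBot (g 1) (tendsto_neg_atBot_iff.2 h4)
      exact h5
  have hKsurj : Function.Surjective K := hKcont.surjective hKtop hKbot
  -- Inverse of K
  set E := StrictMono.orderIsoOfSurjective K hKmono hKsurj with hEdef
  set ψ : ℝ → ℝ := fun c => E.symm c with hψdef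
  have hψcont : Continuous ψ := (OrderIso.continuous E.symm)
  have hKψ : ∀ c, K (ψ c) = c := fun c =>
    StrictMono.orderIsoOfSurjective_self_symm_apply K hKmono hKsurj c
  have hψK : ∀ s, ψ (K s) = s := fun s =>
    StrictMono.orderIsoOfSurjective_symm_apply_self K hKmono hKsurj s
  have hψmono : StrictMono ψ := fun a b hab => E.symm.strictMono hab
  -- The candidate density as a function of the level H
  set M : ℝ → ℝ → ℝ := fun H x => Real.exp (ψ (V x - H)) with hMdef
  have hMpos : ∀ H x, 0 < M H x := fun H x => Real.exp_pos _
  have hMeq : ∀ H x, g (M H x) - j ^ 2 / (2 * (M H x) ^ 2) = V x - H := by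
    intro H x
    have := hKψ (V x - H)
    simpa [hKdef, hMdef] using this
  have hMuniq : ∀ H x t, 0 < t → j ^ 2 / (2 * t ^ 2) - g t = H - V x → t = M H x := by
    intro H x t ht heq
    have h1 : K (Real.log t) = V x - H := by
      simp only [hKdef, Real.exp_log ht]
      linarith
    have h2 : Real.log t = ψ (V x - H) := by rw [← h1, hψK]
    calc t = Real.exp (Real.log t) := (Real.exp_log ht).symm
      _ = M H x := by rw [h2]
  have hMcont : Continuous (Function.uncurry M) := by
    apply Real.continuous_exp.comp
    exact hψcont.comp ((hVc.comp continuous_snd).sub continuous_fst)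
  have hMcx : ∀ H, Continuous (M H) := fun H =>
    Real.continuous_exp.comp (hψcont.comp ((hVc.sub continuous_const)))
  have hMper : ∀ H, Function.Periodic (M H) 1 := fun H x => by
    simp only [hMdef, hVp x]
  -- The total-mass function I
  set I : ℝ → ℝ := fun H => ∫ x in (0:ℝ)..1, M H x with hIdef
  have hIcont : Continuous I :=
    intervalIntegral.continuous_parametric_intervalIntegral_of_continuous' hMcont 0 1
  have hIanti : StrictAnti I := by
    intro a b hab
    have hpt : ∀ x, 0 < M a x - M b x := by
      intro x
      have : ψ (V x - b) < ψ (V x - a) := hψmono (by linarith)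
      have := Real.exp_lt_exp.2 this
      simp only [hMdef]
      linarith
    have h := intervalIntegral.intervalIntegral_pos_of_pos
      (((hMcx a).sub (hMcx b)).intervalIntegrable 0 1) hpt one_pos
    simp only [Pi.sub_apply] at h
    rw [intervalIntegral.integral_sub ((hMcx a).intervalIntegrable 0 1)
      ((hMcx b).intervalIntegrable 0 1)] at h
    simp only [hIdef]
    linarith
  -- Bounds on V over [0,1]
  obtain ⟨x₁, -, hx₁⟩ := isCompact_Icc.exists_isMinOn (Set.nonempty_Icc.2 zero_le_one)
    hVc.continuousOn
  obtain ⟨x₂, -, hx₂⟩ := isCompact_Icc.exists_isMaxOn (Set.nonempty_Icc.2 zero_le_one)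
    hVc.continuousOn
  -- Values of I above and below 1
  have hI1 : 2 ≤ I (V x₁ - K (Real.log 2)) := by
    set H₁ := V x₁ - K (Real.log 2) with hH₁def
    have hpt : ∀ x ∈ Set.Icc (0:ℝ) 1, (2:ℝ) ≤ M H₁ x := by
      intro x hx
      have h1 : K (Real.log 2) ≤ V x - H₁ := by
        have := hx₁ hx
        simp only [hH₁def]
        simp only [Set.mem_setOf_eq] at this ⊢
        linarith [this]
      have h2 : Real.log 2 ≤ ψ (V x - H₁) := by
        have := hψmono.monotone h1
        rwa [hψK] at this
      calc (2:ℝ) = Real.exp (Real.log 2) := (Real.exp_log two_pos).symm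
        _ ≤ M H₁ x := Real.exp_le_exp.2 h2
    calc (2:ℝ) = ∫ _x in (0:ℝ)..1, (2:ℝ) := by simp
      _ ≤ I H₁ := intervalIntegral.integral_mono_on zero_le_one
          (intervalIntegrable_const) ((hMcx H₁).intervalIntegrable 0 1) hpt
  have hI2 : I (V x₂ - K (Real.log (1/2))) ≤ 1/2 := by
    set H₂ := V x₂ - K (Real.log (1/2)) with hH₂def
    have hpt : ∀ x ∈ Set.Icc (0:ℝ) 1, M H₂ x ≤ 1/2 := by
      intro x hx
      have h1 : V x - H₂ ≤ K (Real.log (1/2)) := by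
        have := hx₂ hx
        simp only [hH₂def]
        simp only [Set.mem_setOf_eq] at this ⊢
        linarith [this]
      have h2 : ψ (V x - H₂) ≤ Real.log (1/2) := by
        have := hψmono.monotone h1
        rwa [hψK] at this
      calc M H₂ x ≤ Real.exp (Real.log (1/2)) := Real.exp_le_exp.2 h2
        _ = 1/2 := Real.exp_log (by norm_num)
    calc I H₂ ≤ ∫ _x in (0:ℝ)..1, (1/2:ℝ) := intervalIntegral.integral_mono_on zero_le_one
          ((hMcx H₂).intervalIntegrable 0 1) (intervalIntegrable_const) hpt
      _ = 1/2 := by simp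
  -- Existence of the critical level H̄
  obtain ⟨Hb, -, hHb⟩ : ∃ Hb ∈ Set.uIcc (V x₂ - K (Real.log (1/2))) (V x₁ - K (Real.log 2)),
      I Hb = 1 := by
    apply intermediate_value_uIcc hIcont.continuousOn
    apply Set.mem_uIcc.2 (Or.inl ⟨by linarith, by linarith⟩)
  -- The candidate solution
  set p₀ : ℝ := ∫ y in (0:ℝ)..1, j / M Hb y with hp₀def
  set u₀ : ℝ → ℝ := fun x => (∫ y in (0:ℝ)..x, j / M Hb y) - p₀ * x with hu₀def
  have hjmc : Continuous fun y => j / M Hb y :=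
    continuous_const.div (hMcx Hb) fun y => (hMpos Hb y).ne'
  have hjmper : Function.Periodic (fun y => j / M Hb y) 1 := fun x => by
    simp only [hMper Hb x]
  have hA : ∀ x : ℝ, HasDerivAt (fun x => ∫ y in (0:ℝ)..x, j / M Hb y) (j / M Hb x) x :=
    fun x => (hjmc.integral_hasStrictDerivAt 0 x).hasDerivAt
  have hB : ∀ x : ℝ, HasDerivAt (fun x : ℝ => p₀ * x) p₀ x := fun x => by
    simpa using (hasDerivAt_id x).const_mul p₀
  have hu₀' : ∀ x, HasDerivAt u₀ (j / M Hb x - p₀) x := fun x => (hA x).sub (hB x)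
  have hu₀deriv : ∀ x, deriv u₀ x = j / M Hb x - p₀ := fun x => (hu₀' x).deriv
  have hu₀C : ContDiff ℝ 1 u₀ := by
    rw [contDiff_one_iff_deriv]
    refine ⟨fun x => (hu₀' x).differentiableAt, ?_⟩
    rw [funext hu₀deriv]
    exact hjmc.sub continuous_const
  have hu₀0 : u₀ 0 = 0 := by simp [hu₀def]
  have hu₀per : Function.Periodic u₀ 1 := by
    intro x
    have hsplit : (∫ y in (0:ℝ)..(x+1), j / M Hb y)
        = (∫ y in (0:ℝ)..x, j / M Hb y) + ∫ y in x..(x+1), j / M Hb y :=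
      (intervalIntegral.integral_add_adjacent_intervals (hjmc.intervalIntegrable 0 x)
        (hjmc.intervalIntegrable x (x+1))).symm
    have hper : (∫ y in x..(x+1), j / M Hb y) = ∫ y in (0:ℝ)..(0+1), j / M Hb y :=
      hjmper.intervalIntegral_add_eq x 0
    simp only [hu₀def, hsplit, hper, zero_add]
    simp only [← hp₀def]
    ring
  have hHJB₀ : ∀ x, (deriv u₀ x + p₀) ^ 2 / 2 + V x = g (M Hb x) + Hb := by
    intro x
    rw [hu₀deriv x, sub_add_cancel]
    have h0 := hMeq Hb x
    have h1 : (j / M Hb x) ^ 2 / 2 = j ^ 2 / (2 * (M Hb x) ^ 2) := by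
      rw [div_pow]
      ring
    linarith
  have hcur₀ : ∀ x, M Hb x * (deriv u₀ x + p₀) = j := by
    intro x
    rw [hu₀deriv x, sub_add_cancel]
    field_simp
    exact div_self (hMpos Hb x).ne'
  -- The master necessity lemma
  have key : ∀ (H : ℝ) (m : ℝ → ℝ) (p : ℝ) (u : ℝ → ℝ),
      ((∀ x, 0 < m x) ∧ Continuous m ∧ Function.Periodic m 1 ∧
        (∫ x in (0:ℝ)..1, m x) = 1 ∧
        ContDiff ℝ 1 u ∧ Function.Periodic u 1 ∧ u 0 = 0 ∧
        (∀ x, (deriv u x + p) ^ 2 / 2 + V x = g (m x) + H) ∧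
        (∀ x, m x * (deriv u x + p) = j)) →
      (∀ x t, 0 < t → j ^ 2 / (2 * t ^ 2) - g t = H - V x → t = m x) ∧
      H = Hb ∧ (∀ x, m x = M Hb x) ∧ p = (∫ y in (0:ℝ)..1, j / m y) ∧
      (∀ x, u x = (∫ y in (0:ℝ)..x, j / m y) - p * x) := by
    rintro H m p u ⟨hm, hmc, hmp, hmi, huC, hup, hu0, hHJB, hcur⟩
    have hder : ∀ x, deriv u x + p = j / m x := by
      intro x
      rw [eq_div_iff (hm x).ne']
      have := hcur x
      linarith [hcur x]
    have hFm : ∀ x, j ^ 2 / (2 * (m x) ^ 2) - g (m x) = H - V x := by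
      intro x
      have h1 := hHJB x
      rw [hder x] at h1
      have h2 : (j / m x) ^ 2 / 2 = j ^ 2 / (2 * (m x) ^ 2) := by
        rw [div_pow]; ring
      linarith
    have hmM : ∀ x, m x = M H x := fun x => hMuniq H x (m x) (hm x) (hFm x)
    have claim1 : ∀ x t, 0 < t → j ^ 2 / (2 * t ^ 2) - g t = H - V x → t = m x := by
      intro x t ht heq
      rw [hMuniq H x t ht heq, hmM x]
    have hHH : H = Hb := by
      apply hIanti.injective
      have hIH : I H = 1 := by
        have : I H = ∫ x in (0:ℝ)..1, m x :=
          intervalIntegral.integral_congr fun x _ => (hmM x).symm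
        rw [this, hmi]
      rw [hIH, hHb]
    have hmMb : ∀ x, m x = M Hb x := fun x => by rw [hmM x, hHH]
    -- value of p
    have hdiff : Differentiable ℝ u := (contDiff_one_iff_deriv.1 huC).1
    have hdc : Continuous (deriv u) := (contDiff_one_iff_deriv.1 huC).2
    have hjmc' : Continuous fun y => j / m y :=
      continuous_const.div hmc fun y => (hm y).ne'
    have hder' : ∀ x, deriv u x = j / m x - p := fun x => by
      have := hder x; linarith
    have hint : (∫ x in (0:ℝ)..1, deriv u x) = u 1 - u 0 :=
      intervalIntegral.integral_deriv_eq_sub (fun x _ => hdiff x)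
        (hdc.intervalIntegrable 0 1)
    have hu1 : u 1 = u 0 := by simpa using hup 0
    have hsplit : (∫ x in (0:ℝ)..1, deriv u x)
        = (∫ x in (0:ℝ)..1, j / m x) - p := by
      rw [intervalIntegral.integral_congr (g := fun x => j / m x - p)
        (fun x _ => hder' x)]
      rw [intervalIntegral.integral_sub (hjmc'.intervalIntegrable 0 1)
        (intervalIntegrable_const)]
      simp
    have hp : p = ∫ y in (0:ℝ)..1, j / m y := by
      rw [hu1] at hint
      simp only [sub_self] at hint
      rw [hint] at hsplit
      linarith [hsplit]
    -- formula for u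
    have hA' : ∀ x : ℝ, HasDerivAt (fun x => ∫ y in (0:ℝ)..x, j / m y) (j / m x) x :=
      fun x => (hjmc'.integral_hasStrictDerivAt 0 x).hasDerivAt
    have hB' : ∀ x : ℝ, HasDerivAt (fun x : ℝ => p * x) p x := fun x => by
      simpa using (hasDerivAt_id x).const_mul p
    have hw' : ∀ x, HasDerivAt
        (fun x => u x - ((∫ y in (0:ℝ)..x, j / m y) - p * x)) 0 x := by
      intro x
      have h1 := ((hdiff x).hasDerivAt).sub ((hA' x).sub (hB' x))
      have h2 : deriv u x - (j / m x - p) = 0 := by rw [hder' x]; ring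
      rwa [h2] at h1
    have hu : ∀ x, u x = (∫ y in (0:ℝ)..x, j / m y) - p * x := by
      intro x
      have hconst := is_const_of_deriv_eq_zero
        (f := fun x => u x - ((∫ y in (0:ℝ)..x, j / m y) - p * x))
        (fun x => (hw' x).differentiableAt) (fun x => (hw' x).deriv) x 0
      simp only [intervalIntegral.integral_same, mul_zero, sub_zero, hu0, zero_sub,
        sub_zero] at hconst
      have : u 0 - (0 - p * 0) = 0 := by rw [hu0]; ring
      -- hconst : u x - (... ) = u 0 - (0 - p*0)
      nlinarith [hconst]
    exact ⟨claim1, hHH, hmMb, hp, hu⟩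
  constructor
  · refine ⟨(Hb, M Hb, p₀, u₀), ⟨hMpos Hb, hMcx Hb, hMper Hb, hHb, hu₀C, hu₀per, hu₀0,
      hHJB₀, hcur₀⟩, ?_⟩
    rintro ⟨H, m, p, u⟩ hq
    obtain ⟨-, hHH, hmMb, hp, hu⟩ := key H m p u hq
    have hmfun : m = M Hb := funext hmMb
    have hpp : p = p₀ := by rw [hp, hmfun, hp₀def]
    refine Prod.ext hHH (Prod.ext (by simpa using hmfun) (Prod.ext (by simpa using hpp) ?_))
    show u = u₀
    funext x
    rw [hu x, hmfun, hpp, hu₀def]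
  · intro H m p u hq
    obtain ⟨c1, -, -, hp, hu⟩ := key H m p u hq
    exact ⟨c1, hp, hu⟩
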